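/- Equiangular fractals of unity: suppose all rotation angles are equal and rational multiples of 2π, i.e. φ_k = |φ_k|·e^{2πiN/M} for every k = 1,…,n, with integers M ≥ 1 and 0 ≤ N < M; set M' := M / gcd(N,M). Then the attractor F equals the attractor of the IFS {T_x : x a word of length M' over {1,…,n}}, each of whose factors φ_x is a positive real (so this is a Sierpiński IFS), and conv(F) = conv({p_x : x a word of length M'}); in particular every extremal point of F is the fixed point p_x of some composition T_x with |x| = M'. -/

import Mathlib

open Complex

noncomputable section

/-- Composition of IFS maps along a finite word: `T_a = T_{a₁} ∘ ⋯ ∘ T_{a_L}`. -/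
def wordMap {n : ℕ} (T : Fin n → ℂ → ℂ) : List (Fin n) → ℂ → ℂ
  | [] => id
  | k :: a => T k ∘ wordMap T a

/-- Product of factors along a finite word: `φ_a = φ_{a₁} ⋯ φ_{a_L}`. -/
def wordFactor {n : ℕ} (φ : Fin n → ℂ) (a : List (Fin n)) : ℂ :=
  (a.map φ).prod

/-- `e` is an extremal point of `S`: it belongs to `S` and does not lie in the open
segment between any two distinct points of `S`. -/
def IsExtremal (S : Set ℂ) (e : ℂ) : Prop :=
  e ∈ S ∧ ¬ ∃ s₁ s₂ : ℂ, s₁ ∈ S ∧ s₂ ∈ S ∧ s₁ ≠ s₂ ∧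
    ∃ t : ℝ, 0 < t ∧ t < 1 ∧ e = t • s₁ + (1 - t) • s₂

lemma wordFactor_nil {n : ℕ} (φ : Fin n → ℂ) : wordFactor φ [] = 1 := rfl

lemma wordFactor_cons {n : ℕ} (φ : Fin n → ℂ) (k : Fin n) (x : List (Fin n)) :
    wordFactor φ (k :: x) = φ k * wordFactor φ x := by
  simp [wordFactor]

lemma wordMap_sub {n : ℕ} (p φ : Fin n → ℂ) (T : Fin n → ℂ → ℂ)
    (hT : ∀ k z, T k z = p k + φ k * (z - p k)) :
    ∀ (x : List (Fin n)) (z w : ℂ),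
      wordMap T x z - wordMap T x w = wordFactor φ x * (z - w) := by
  intro x
  induction x with
  | nil => intro z w; simp [wordMap, wordFactor]
  | cons k x ih =>
    intro z w
    simp only [wordMap, Function.comp_apply, hT, wordFactor_cons]
    have : p k + φ k * (wordMap T x z - p k) - (p k + φ k * (wordMap T x w - p k))
        = φ k * (wordMap T x z - wordMap T x w) := by ring
    rw [this, ih]
    ring

lemma abs_wordFactor_le {n : ℕ} (φ : Fin n → ℂ)
    (hφ : ∀ k, ‖φ k‖ < 1) :
    ∀ x : List (Fin n), ‖wordFactor φ x‖ ≤ 1 := by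
  intro x
  induction x with
  | nil => simp [wordFactor]
  | cons k x ih =>
    rw [wordFactor_cons, norm_mul]
    calc ‖φ k‖ * ‖wordFactor φ x‖
        ≤ 1 * 1 := by
          apply mul_le_mul (le_of_lt (hφ k)) ih (norm_nonneg _) zero_le_one
      _ = 1 := by ring

lemma abs_wordFactor_lt {n : ℕ} (φ : Fin n → ℂ)
    (hφ : ∀ k, ‖φ k‖ < 1) (x : List (Fin n)) (hx : x ≠ []) :
    ‖wordFactor φ x‖ < 1 := by
  cases x with
  | nil => exact absurd rfl hx
  | cons k x =>
    rw [wordFactor_cons, norm_mul]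
    calc ‖φ k‖ * ‖wordFactor φ x‖
        ≤ ‖φ k‖ * 1 :=
          mul_le_mul_of_nonneg_left (abs_wordFactor_le φ hφ x) (norm_nonneg _)
      _ = ‖φ k‖ := by ring
      _ < 1 := hφ k

lemma wordFactor_eq_prod_mul_pow {n : ℕ} (φ : Fin n → ℂ) (E : ℂ)
    (hunity : ∀ k, φ k = (‖φ k‖ : ℂ) * E) :
    ∀ x : List (Fin n),
      wordFactor φ x =
        (((x.map fun k => ‖φ k‖).prod : ℝ) : ℂ) * E ^ x.length := by
  intro x
  induction x with
  | nil => simp [wordFactor]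
  | cons k x ih =>
    rw [wordFactor_cons, ih, hunity k, List.map_cons, List.prod_cons, List.length_cons]
    push_cast
    ring

/-- equiangular fractals of unity: if all rotation angles equal `2πN/M`, and
`M' := M / gcd(N,M)`, then every length-`M'` word has positive real factor `φ_x`, `F` is
invariant under (hence the attractor of) the IFS of all compositions `T_x` with
`|x| = M'`, and `conv F = conv {p_x : |x| = M'}`; in particular every extremal point of
`F` is some `p_x` with `|x| = M'`. -/
theorem equiangular_convex_hull {n : ℕ} (hn : 1 ≤ n) (p φ : Fin n → ℂ)
    (hφ : ∀ k, 0 < ‖φ k‖ ∧ ‖φ k‖ < 1)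
    (T : Fin n → ℂ → ℂ) (hT : ∀ k z, T k z = p k + φ k * (z - p k))
    (F : Set ℂ) (hFne : F.Nonempty) (hFc : IsCompact F)
    (hFinv : F = ⋃ k, T k '' F)
    (M : ℕ) (hM : 1 ≤ M) (N : ℕ) (hN : N < M)
    (hunity : ∀ k, φ k = (‖φ k‖ : ℂ) *
      Complex.exp ((((2 * Real.pi * (N : ℝ)) / (M : ℝ) : ℝ) : ℂ) * Complex.I))
    (pp : List (Fin n) → ℂ) (hpp : ∀ x, x ≠ [] → wordMap T x (pp x) = pp x) :
    (∀ x : List (Fin n), x.length = M / Nat.gcd N M →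
      ∃ r : ℝ, 0 < r ∧ wordFactor φ x = (r : ℂ)) ∧
    (F = ⋃ x : {x : List (Fin n) // x.length = M / Nat.gcd N M},
      wordMap T x.1 '' F) ∧
    (convexHull ℝ F =
      convexHull ℝ {z : ℂ | ∃ x : List (Fin n), x.length = M / Nat.gcd N M ∧ z = pp x}) ∧
    (∀ e, IsExtremal F e →
      ∃ x : List (Fin n), x.length = M / Nat.gcd N M ∧ e = pp x) := by

  have hMpos : 0 < M := hM
  set g : ℕ := Nat.gcd N M with hgdef
  set M' : ℕ := M / Nat.gcd N M with hM'def
  have hgpos : 0 < g := Nat.gcd_pos_of_pos_right N hMpos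
  have hgN : g ∣ N := Nat.gcd_dvd_left N M
  have hgM : g ∣ M := Nat.gcd_dvd_right N M
  have hM'pos : 0 < M' := Nat.div_pos (Nat.le_of_dvd hMpos hgM) hgpos
  set θ : ℝ := (2 * Real.pi * (N : ℝ)) / (M : ℝ) with hθdef
  set E : ℂ := Complex.exp ((θ : ℂ) * Complex.I) with hEdef
  -- the exponential of the rotation vanishes after M' steps
  have hnat : M' * N = (N / g) * M := by
    have h1 : M' * g = M := Nat.div_mul_cancel hgM
    have h2 : (N / g) * g = N := Nat.div_mul_cancel hgN
    calc M' * N = M' * ((N / g) * g) := by rw [h2]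
      _ = (N / g) * (M' * g) := by ring
      _ = (N / g) * M := by rw [h1]
  have hmr : (M' : ℝ) * θ = ((N / g : ℕ) : ℝ) * (2 * Real.pi) := by
    have hM0 : (M : ℝ) ≠ 0 := by positivity
    have hnr : (M' : ℝ) * (N : ℝ) = ((N / g : ℕ) : ℝ) * (M : ℝ) := by exact_mod_cast hnat
    calc (M' : ℝ) * θ = ((M' : ℝ) * (N : ℝ)) * (2 * Real.pi) / (M : ℝ) := by
          rw [hθdef]; ring
      _ = (((N / g : ℕ) : ℝ) * (M : ℝ)) * (2 * Real.pi) / (M : ℝ) := by rw [hnr]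
      _ = ((N / g : ℕ) : ℝ) * (2 * Real.pi) := by field_simp
  have hE : E ^ M' = 1 := by
    rw [hEdef, ← Complex.exp_nat_mul]
    have hc : ((M' : ℕ) : ℂ) * ((θ : ℂ) * Complex.I)
        = ((N / g : ℕ) : ℂ) * (2 * (Real.pi : ℂ) * Complex.I) := by
      calc ((M' : ℕ) : ℂ) * ((θ : ℂ) * Complex.I)
          = (((M' : ℝ) * θ : ℝ) : ℂ) * Complex.I := by push_cast; ring
        _ = ((((N / g : ℕ) : ℝ) * (2 * Real.pi) : ℝ) : ℂ) * Complex.I := by rw [hmr]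
        _ = ((N / g : ℕ) : ℂ) * (2 * (Real.pi : ℂ) * Complex.I) := by push_cast; ring
    rw [hc, Complex.exp_nat_mul_two_pi_mul_I]
  -- Part 1 (strengthened)
  have hfac : ∀ x : List (Fin n), x.length = M' →
      ∃ r : ℝ, 0 < r ∧ r < 1 ∧ wordFactor φ x = (r : ℂ) := by
    intro x hx
    have hxne : x ≠ [] := by
      intro h; rw [h] at hx; simp at hx; omega
    set r : ℝ := (x.map fun k => ‖φ k‖).prod with hrdef
    have hrpos : 0 < r := by
      apply List.prod_pos
      intro a ha
      obtain ⟨k, _, rfl⟩ := List.mem_map.1 ha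
      exact (hφ k).1
    have heq : wordFactor φ x = (r : ℂ) := by
      rw [wordFactor_eq_prod_mul_pow φ E (fun k => hunity k) x, hx, hE, mul_one]
    have hrlt : r < 1 := by
      have h := abs_wordFactor_lt φ (fun k => (hφ k).2) x hxne
      rw [heq, Complex.norm_real, Real.norm_eq_abs, abs_of_pos hrpos] at h
      exact h
    exact ⟨r, hrpos, hrlt, heq⟩
  -- Part 2 by induction on word length
  have hIter : ∀ L : ℕ, F = ⋃ x : {x : List (Fin n) // x.length = L}, wordMap T x.1 '' F := by
    intro L
    induction L with
    | zero =>
      apply Set.eq_of_subset_of_subset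
      · intro z hz
        exact Set.mem_iUnion.2 ⟨⟨[], rfl⟩, ⟨z, hz, rfl⟩⟩
      · intro z hz
        obtain ⟨⟨x, hx⟩, hk⟩ := Set.mem_iUnion.1 hz
        obtain ⟨w, hw, rfl⟩ := hk
        have : x = [] := List.length_eq_zero_iff.1 hx
        subst this
        simpa [wordMap] using hw
    | succ L ih =>
      apply Set.eq_of_subset_of_subset
      · intro z hz
        rw [hFinv] at hz
        obtain ⟨k, hk⟩ := Set.mem_iUnion.1 hz
        obtain ⟨w, hw, rfl⟩ := hk
        rw [ih] at hw
        obtain ⟨⟨x, hx⟩, hk2⟩ := Set.mem_iUnion.1 hw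
        obtain ⟨v, hv, rfl⟩ := hk2
        exact Set.mem_iUnion.2 ⟨⟨k :: x, by simp [hx]⟩, ⟨v, hv, rfl⟩⟩
      · intro z hz
        obtain ⟨⟨x, hx⟩, hk⟩ := Set.mem_iUnion.1 hz
        obtain ⟨v, hv, rfl⟩ := hk
        cases x with
        | nil => simp at hx
        | cons k x' =>
          have hx' : x'.length = L := by simpa using hx
          have hwv : wordMap T x' v ∈ F := by
            rw [ih]; exact Set.mem_iUnion.2 ⟨⟨x', hx'⟩, ⟨v, hv, rfl⟩⟩
          rw [hFinv]
          exact Set.mem_iUnion.2 ⟨k, ⟨wordMap T x' v, hwv, rfl⟩⟩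
  have hsubF : ∀ x : List (Fin n), wordMap T x '' F ⊆ F := by
    intro x z hz
    rw [hIter x.length]
    exact Set.mem_iUnion.2 ⟨⟨x, rfl⟩, hz⟩
  -- affine form of wordMap around its fixed point
  have hform : ∀ x : List (Fin n), x ≠ [] → ∀ z,
      wordMap T x z = pp x + wordFactor φ x * (z - pp x) := by
    intro x hx z
    have h := wordMap_sub p φ T hT x z (pp x)
    rw [hpp x hx] at h
    linear_combination h
  -- fixed points belong to F
  have hppF : ∀ x : List (Fin n), x ≠ [] → pp x ∈ F := by
    intro x hx
    obtain ⟨z₀, hz₀⟩ := hFne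
    have hmem : ∀ m : ℕ, (wordMap T x)^[m] z₀ ∈ F := by
      intro m
      induction m with
      | zero => simpa using hz₀
      | succ m ih =>
        rw [Function.iterate_succ_apply']
        exact hsubF x ⟨_, ih, rfl⟩
    have hdiff : ∀ m : ℕ, (wordMap T x)^[m] z₀ - pp x
        = (wordFactor φ x) ^ m * (z₀ - pp x) := by
      intro m
      induction m with
      | zero => simp
      | succ m ih =>
        rw [Function.iterate_succ_apply', hform x hx]
        linear_combination (wordFactor φ x) * ih
    have htend : Filter.Tendsto (fun m => (wordMap T x)^[m] z₀)
        Filter.atTop (nhds (pp x)) := by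
      rw [tendsto_iff_dist_tendsto_zero]
      have heq : (fun m => dist ((wordMap T x)^[m] z₀) (pp x))
          = fun m => (‖wordFactor φ x‖) ^ m * ‖z₀ - pp x‖ := by
        funext m
        rw [Complex.dist_eq, hdiff m, norm_mul, norm_pow]
      rw [heq]
      have h0 : Filter.Tendsto (fun m : ℕ => (‖wordFactor φ x‖) ^ m)
          Filter.atTop (nhds 0) :=
        tendsto_pow_atTop_nhds_zero_of_lt_one (norm_nonneg _)
          (abs_wordFactor_lt φ (fun k => (hφ k).2) x hx)
      simpa using h0.mul_const _
    exact hFc.isClosed.mem_of_tendsto htend (Filter.Eventually.of_forall hmem)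
  -- the finite set of fixed points and its convex hull
  set S : Set ℂ := {z : ℂ | ∃ x : List (Fin n), x.length = M' ∧ z = pp x} with hSdef
  have hSfin : S.Finite := by
    have hsub : S ⊆ pp '' {x : List (Fin n) | x.length = M'} := by
      rintro z ⟨x, hx, rfl⟩; exact ⟨x, hx, rfl⟩
    exact ((List.finite_length_eq (Fin n) M').image pp).subset hsub
  have hSne : S.Nonempty :=
    ⟨pp (List.replicate M' ⟨0, hn⟩), ⟨List.replicate M' ⟨0, hn⟩, by simp, rfl⟩⟩
  have hSF : S ⊆ F := by
    rintro z ⟨x, hx, rfl⟩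
    apply hppF
    intro h; rw [h] at hx; simp at hx; omega
  set C : Set ℂ := convexHull ℝ S with hCdef
  have hCconv : Convex ℝ C := convex_convexHull ℝ S
  have hCne : C.Nonempty := by
    obtain ⟨s, hs⟩ := hSne
    exact ⟨s, subset_convexHull ℝ S hs⟩
  have hCcl : IsClosed C := (hSfin.isCompact_convexHull ℝ).isClosed
  have hTC : ∀ x : List (Fin n), x.length = M' → ∀ c ∈ C, wordMap T x c ∈ C := by
    intro x hx c hc
    obtain ⟨r, hr0, hr1, hreq⟩ := hfac x hx
    have hxne : x ≠ [] := by intro h; rw [h] at hx; simp at hx; omega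
    have hp : pp x ∈ C := subset_convexHull ℝ S ⟨x, hx, rfl⟩
    have hcomb : wordMap T x c = (1 - r) • pp x + r • c := by
      rw [hform x hxne c, hreq]
      simp only [Complex.real_smul]
      push_cast
      ring
    rw [hcomb]
    exact hCconv hp hc (by linarith) (le_of_lt hr0) (by ring)
  have hFC : F ⊆ C := by
    have hcont : Continuous fun z : ℂ => Metric.infDist z C :=
      Metric.continuous_infDist_pt C
    obtain ⟨z₀, hz₀F, hmax'⟩ := hFc.exists_isMaxOn hFne hcont.continuousOn
    have hmax : ∀ z ∈ F, Metric.infDist z C ≤ Metric.infDist z₀ C := fun z hz => hmax' hz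
    have hz0 : Metric.infDist z₀ C ≤ 0 := by
      obtain ⟨⟨x, hx⟩, hk⟩ := Set.mem_iUnion.1 ((hIter M') ▸ hz₀F)
      obtain ⟨w, hwF, hwz⟩ := hk
      obtain ⟨r, hr0, hr1, hreq⟩ := hfac x hx
      obtain ⟨c₀, hc₀C, hdist⟩ := hCcl.exists_infDist_eq_dist hCne w
      have h3 : Metric.infDist z₀ C ≤ dist z₀ (wordMap T x c₀) :=
        Metric.infDist_le_dist_of_mem (hTC x hx c₀ hc₀C)
      have h4 : dist z₀ (wordMap T x c₀) = r * dist w c₀ := by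
        rw [← hwz, Complex.dist_eq, Complex.dist_eq, wordMap_sub p φ T hT x w c₀,
          hreq, norm_mul, Complex.norm_real, Real.norm_eq_abs, abs_of_pos hr0]
      have h5 : Metric.infDist w C ≤ Metric.infDist z₀ C := hmax w hwF
      nlinarith [mul_le_mul_of_nonneg_left h5 (le_of_lt hr0)]
    intro z hzF
    have h0 : Metric.infDist z C = 0 :=
      le_antisymm (le_trans (hmax z hzF) hz0) Metric.infDist_nonneg
    exact (hCcl.mem_iff_infDist_zero hCne).2 h0
  refine ⟨fun x hx => (hfac x hx).imp fun r hr => ⟨hr.1, hr.2.2⟩, hIter M', ?_, ?_⟩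
  · apply le_antisymm
    · exact convexHull_min hFC hCconv
    · exact convexHull_mono hSF
  · rintro e ⟨heF, hext⟩
    obtain ⟨⟨x, hx⟩, hk⟩ := Set.mem_iUnion.1 ((hIter M') ▸ heF)
    obtain ⟨w, hwF, hwz⟩ := hk
    have hxne : x ≠ [] := by intro h; rw [h] at hx; simp at hx; omega
    obtain ⟨r, hr0, hr1, hreq⟩ := hfac x hx
    by_cases hwp : w = pp x
    · refine ⟨x, hx, ?_⟩
      rw [← hwz, hwp, hpp x hxne]
    · exfalso
      apply hext
      refine ⟨w, pp x, hwF, hppF x hxne, hwp, r, hr0, hr1, ?_⟩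
      rw [← hwz, hform x hxne w, hreq]
      simp only [Complex.real_smul]
      push_cast
      ring
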